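/- arXiv:1010.1186 — 3 statements merged into one kernel-verified Lean document; each statement's English description precedes it below -/
import Mathlib

section
/- Let τ be a regular Borel measure on ℝⁿ that is homogeneous of degree a ≥ 0 with respect to a system of dilations ε_t on ℝⁿ (i.e., τ(ε_t(A)) = t^a τ(A) for every Borel set A and every t > 0, where ε_t(λ₁,...,λₙ) = (t^{w₁}λ₁,...,t^{wₙ}λₙ) with weights w_j ≥ 1 and a > 0). Then τ is locally 1-bounded on ℝⁿ \ {0}: for every compact K ⊆ ℝⁿ \ {0} and every 0 ≤ γ < 1, there exist C, r̄ > 0 such that τ(B(λ,r)) ≤ C r^γ for all λ ∈ K and 0 < r ≤ r̄. -/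
open MeasureTheory
open scoped ENNReal

-- Bernoulli-type: t - s ≤ t^w - s^w for 1 ≤ s ≤ t, w ≥ 1
lemma aux_rpow_sub {w s t : ℝ} (hw : 1 ≤ w) (hs : 1 ≤ s) (hst : s ≤ t) :
    t - s ≤ t ^ w - s ^ w := by
  have hs0 : 0 < s := by linarith
  have ht0 : 0 < t := by linarith
  have hx : (0:ℝ) ≤ t / s - 1 := by
    rw [sub_nonneg, le_div_iff₀ hs0]; linarith
  have hb := one_add_mul_self_le_rpow_one_add (by linarith : (-1:ℝ) ≤ t/s - 1) hw
  rw [add_sub_cancel] at hb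
  have hdiv : (t/s) ^ w = t ^ w / s ^ w := Real.div_rpow ht0.le hs0.le w
  -- hb : 1 + w * (t/s - 1) ≤ (t/s)^w
  have hsw : (1:ℝ) ≤ s ^ w := Real.one_le_rpow hs (by linarith)
  have h2 : s ^ w * (1 + w * (t/s - 1)) ≤ t ^ w := by
    calc s ^ w * (1 + w * (t/s - 1)) ≤ s ^ w * (t/s) ^ w := by
          apply mul_le_mul_of_nonneg_left hb (by positivity)
      _ = t ^ w := by rw [hdiv]; field_simp
  have h3 : 1 + (t/s - 1) ≤ 1 + w * (t/s - 1) := by nlinarith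
  have h4 : s ^ w * (t/s) ≤ s ^ w * (1 + w * (t/s - 1)) := by
    apply mul_le_mul_of_nonneg_left _ (by positivity)
    calc t/s = 1 + (t/s - 1) := by ring
      _ ≤ _ := h3
  have h5 : s ^ w * (t/s) = s^(w-1) * t := by
    rw [Real.rpow_sub hs0, Real.rpow_one]; field_simp
  have h6 : (1:ℝ) ≤ s ^ (w-1) := Real.one_le_rpow hs (by linarith)
  have h7 : s ^ w = s ^ (w-1) * s := by
    rw [← Real.rpow_add_one hs0.ne' (w-1)]; ring_nf
  have h8 : s ^ (w-1) * t ≤ t ^ w := by linarith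
  nlinarith [mul_le_mul_of_nonneg_right h6 (sub_nonneg.2 hst)]

-- norm comparison upper
lemma aux_norm_le {n : ℕ} (u v : EuclideanSpace ℝ (Fin n)) (c : ℝ) (hc : 0 ≤ c)
    (h : ∀ i, |u i| ≤ c * |v i|) : ‖u‖ ≤ c * ‖v‖ := by
  rw [EuclideanSpace.norm_eq, EuclideanSpace.norm_eq, ← Real.sqrt_sq hc,
    ← Real.sqrt_mul (by positivity)]
  apply Real.sqrt_le_sqrt
  rw [Finset.mul_sum]
  apply Finset.sum_le_sum
  intro i _
  have hi := h i
  simp only [Real.norm_eq_abs]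
  nlinarith [abs_nonneg (u i), abs_nonneg (v i)]

lemma aux_norm_ge {n : ℕ} (u v : EuclideanSpace ℝ (Fin n)) (c : ℝ) (hc : 0 ≤ c)
    (h : ∀ i, c * |v i| ≤ |u i|) : c * ‖v‖ ≤ ‖u‖ := by
  rw [EuclideanSpace.norm_eq, EuclideanSpace.norm_eq, ← Real.sqrt_sq hc,
    ← Real.sqrt_mul (by positivity)]
  apply Real.sqrt_le_sqrt
  rw [Finset.mul_sum]
  apply Finset.sum_le_sum
  intro i _
  have hi := h i
  simp only [Real.norm_eq_abs]
  nlinarith [abs_nonneg (u i), abs_nonneg (v i), mul_nonneg hc (abs_nonneg (v i))]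

def dil {n : ℕ} (c : Fin n → ℝ) (x : EuclideanSpace ℝ (Fin n)) :
    EuclideanSpace ℝ (Fin n) := WithLp.toLp 2 (fun i => c i * x i)

lemma dil_apply {n : ℕ} (c : Fin n → ℝ) (x : EuclideanSpace ℝ (Fin n)) (i : Fin n) :
    dil c x i = c i * x i := rfl

lemma dil_lip {n : ℕ} (c : Fin n → ℝ) (M : ℝ) (hM : 0 ≤ M) (hc : ∀ i, |c i| ≤ M)
    (x y : EuclideanSpace ℝ (Fin n)) :
    ‖dil c x - dil c y‖ ≤ M * ‖x - y‖ := by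
  apply aux_norm_le _ _ M hM
  intro i
  simp only [PiLp.sub_apply, dil_apply]
  rw [show c i * x i - c i * y i = c i * (x i - y i) by ring, abs_mul]
  exact mul_le_mul_of_nonneg_right (hc i) (abs_nonneg _)

lemma dil_norm_le {n : ℕ} (c : Fin n → ℝ) (M : ℝ) (hM : 0 ≤ M) (hc : ∀ i, |c i| ≤ M)
    (x : EuclideanSpace ℝ (Fin n)) :
    ‖dil c x‖ ≤ M * ‖x‖ := by
  apply aux_norm_le _ _ M hM
  intro i
  rw [dil_apply, abs_mul]
  exact mul_le_mul_of_nonneg_right (hc i) (abs_nonneg _)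

lemma dil_sep {n : ℕ} (c d : Fin n → ℝ) (e : ℝ) (he : 0 ≤ e) (hc : ∀ i, e ≤ |c i - d i|)
    (x : EuclideanSpace ℝ (Fin n)) :
    e * ‖x‖ ≤ ‖dil c x - dil d x‖ := by
  apply aux_norm_ge _ _ e he
  intro i
  simp only [PiLp.sub_apply, dil_apply]
  rw [show c i * x i - d i * x i = (c i - d i) * x i by ring, abs_mul]
  exact mul_le_mul_of_nonneg_right (hc i) (abs_nonneg _)

lemma dil_image_open {n : ℕ} (c : Fin n → ℝ) (hc : ∀ i, c i ≠ 0)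
    {S : Set (EuclideanSpace ℝ (Fin n))} (hS : IsOpen S) :
    IsOpen (dil c '' S) := by
  let L : EuclideanSpace ℝ (Fin n) →ₗ[ℝ] EuclideanSpace ℝ (Fin n) :=
    { toFun := dil (fun i => (c i)⁻¹)
      map_add' := by
        intro x y; ext i
        simp only [dil_apply, PiLp.add_apply]; ring
      map_smul' := by
        intro m x; ext i
        simp only [dil_apply, PiLp.smul_apply, RingHom.id_apply, smul_eq_mul]; ring }
  have hgc : Continuous (dil (fun i => (c i)⁻¹) :
      EuclideanSpace ℝ (Fin n) → EuclideanSpace ℝ (Fin n)) :=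
    L.continuous_of_finiteDimensional
  have hli : Function.LeftInverse (dil fun i => (c i)⁻¹) (dil c) := by
    intro x; ext i; simp only [dil_apply]; field_simp [hc i, mul_comm]
  have hri : Function.RightInverse (dil fun i => (c i)⁻¹) (dil c) := by
    intro x; ext i; simp only [dil_apply]; field_simp [hc i, mul_comm]
  have himg : dil c '' S = dil (fun i => (c i)⁻¹) ⁻¹' S :=
    congrFun (Set.image_eq_preimage_of_inverse hli hri) S
  rw [himg]
  exact hS.preimage hgc

set_option maxHeartbeats 1000000 in
/-- A regular Borel measure on ℝⁿ which is homogeneous of degree `a > 0`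
with respect to a system of dilations `ε_t` (with weights `w i ≥ 1`) is locally
1-bounded on ℝⁿ \ {0}. -/
theorem stmt0 {n : ℕ} (τ : Measure (EuclideanSpace ℝ (Fin n))) [τ.Regular]
    (w : Fin n → ℝ) (hw : ∀ i, 1 ≤ w i) (a : ℝ) (ha : 0 < a)
    (hhom : ∀ A : Set (EuclideanSpace ℝ (Fin n)), MeasurableSet A → ∀ t : ℝ, 0 < t →
      τ ((fun x : EuclideanSpace ℝ (Fin n) =>
            (WithLp.toLp 2 (fun i => t ^ (w i) * x i) : EuclideanSpace ℝ (Fin n))) '' A)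
        = ENNReal.ofReal (t ^ a) * τ A) :
    ∀ K : Set (EuclideanSpace ℝ (Fin n)), IsCompact K → K ⊆ {0}ᶜ →
      ∀ γ : ℝ, 0 ≤ γ → γ < 1 →
        ∃ C : ℝ, 0 < C ∧ ∃ r₀ : ℝ, 0 < r₀ ∧
          ∀ lam ∈ K, ∀ r : ℝ, 0 < r → r ≤ r₀ →
            τ (Metric.ball lam r) ≤ ENNReal.ofReal (C * r ^ γ) := by
  intro K hK hK0 γ hγ0 hγ1
  rcases K.eq_empty_or_nonempty with rfl | ⟨lam0, hlam0⟩
  · exact ⟨1, one_pos, 1, one_pos, by simp⟩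
  have hlam0ne : lam0 ≠ 0 := Set.mem_compl_singleton_iff.1 (hK0 hlam0)
  have hι : Nonempty (Fin n) := by
    by_contra h
    rw [not_nonempty_iff] at h
    exact hlam0ne (by ext i; exact h.elim i)
  obtain ⟨lm, hlmK, hlmmin⟩ := hK.exists_isMinOn ⟨lam0, hlam0⟩ continuous_norm.continuousOn
  set ρ := ‖lm‖ with hρdef
  have hρ : 0 < ρ := norm_pos_iff.2 (Set.mem_compl_singleton_iff.1 (hK0 hlmK))
  have hρle : ∀ lam ∈ K, ρ ≤ ‖lam‖ := fun lam h => hlmmin h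
  obtain ⟨Rb, hRb⟩ := hK.isBounded.subset_closedBall 0
  have hRble : ∀ lam ∈ K, ‖lam‖ ≤ Rb := fun lam h => by
    simpa [mem_closedBall_zero_iff] using hRb h
  -- the max weight and scaling constant
  set W := Finset.univ.sup' Finset.univ_nonempty w with hWdef
  have hWle : ∀ i, w i ≤ W := fun i => Finset.le_sup' w (Finset.mem_univ i)
  have hW1 : 1 ≤ W := le_trans (hw hι.some) (hWle hι.some)
  set M := (2:ℝ) ^ W with hMdef
  have hM0 : 0 < M := Real.rpow_pos_of_pos two_pos W
  have hMt : ∀ t : ℝ, 1 ≤ t → t ≤ 2 → ∀ i, |t ^ (w i)| ≤ M := by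
    intro t ht1 ht2 i
    rw [abs_of_nonneg (Real.rpow_nonneg (by linarith) _)]
    calc t ^ (w i) ≤ 2 ^ (w i) :=
          Real.rpow_le_rpow (by linarith) ht2 (by linarith [hw i])
      _ ≤ M := Real.rpow_le_rpow_of_exponent_le one_le_two (hWle i)
  set T := τ (Metric.closedBall 0 (M*(Rb+1))) with hTdef
  have hTtop : T ≠ ⊤ := (isCompact_closedBall _ _).measure_lt_top.ne
  have hT0 : (0:ℝ) ≤ T.toReal := ENNReal.toReal_nonneg
  refine ⟨6*M*(T.toReal+1)/ρ, by positivity, min 1 (ρ/(6*M)), by positivity, ?_⟩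
  intro lam hlam r hr hrr
  have hr1 : r ≤ 1 := le_trans hrr (min_le_left _ _)
  have hrρ : r ≤ ρ/(6*M) := le_trans hrr (min_le_right _ _)
  have hlamρ : ρ ≤ ‖lam‖ := hρle lam hlam
  have hlamRb : ‖lam‖ ≤ Rb := hRble lam hlam
  set δ := 3*M*r/ρ with hδdef
  have hδ0 : 0 < δ := by positivity
  have hδρ : δ * ρ = 3*M*r := by rw [hδdef]; field_simp
  have hδh : δ ≤ 1/2 := by
    rw [hδdef, div_le_iff₀ hρ]
    have e : 3*M*(ρ/(6*M)) = ρ/2 := by field_simp; ring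
    nlinarith [mul_le_mul_of_nonneg_left hrρ (by positivity : (0:ℝ) ≤ 3*M)]
  set N := ⌊1/(2*δ)⌋₊ + 1 with hNdef
  have hN0 : 0 < N := Nat.succ_pos _
  have hNge : 1/(2*δ) < (N:ℝ) := by
    rw [hNdef]; push_cast; exact Nat.lt_floor_add_one _
  have hkδ : ∀ k : ℕ, k < N → (k:ℝ) * δ ≤ 1/2 := by
    intro k hk
    have hk' : k ≤ ⌊1/(2*δ)⌋₊ := Nat.lt_succ_iff.1 hk
    have hkr : (k:ℝ) ≤ 1/(2*δ) :=
      le_trans (Nat.cast_le.2 hk') (Nat.floor_le (by positivity))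
    have h2 : (1/(2*δ)) * δ = 1/2 := by field_simp
    nlinarith
  set tk := fun k : ℕ => 1 + (k:ℝ) * δ with htkdef
  have htk1 : ∀ k : ℕ, 1 ≤ tk k := by
    intro k
    have h0 : (0:ℝ) ≤ (k:ℝ)*δ := by positivity
    show (1:ℝ) ≤ 1 + (k:ℝ)*δ
    linarith
  have htk2 : ∀ k, k < N → tk k ≤ 2 := by
    intro k hk; have := hkδ k hk
    show 1 + (k:ℝ)*δ ≤ 2
    linarith
  have htkpos : ∀ k : ℕ, 0 < tk k := fun k => lt_of_lt_of_le one_pos (htk1 k)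
  set U := fun k : ℕ => dil (fun i => tk k ^ (w i)) '' Metric.ball lam r with hUdef
  have hUopen : ∀ k, IsOpen (U k) := fun k =>
    dil_image_open _ (fun i => (Real.rpow_pos_of_pos (htkpos k) _).ne') Metric.isOpen_ball
  have hUmeas : ∀ k, τ (U k) = ENNReal.ofReal ((tk k)^a) * τ (Metric.ball lam r) := by
    intro k
    exact hhom _ Metric.isOpen_ball.measurableSet (tk k) (htkpos k)
  have hUge : ∀ k, τ (Metric.ball lam r) ≤ τ (U k) := by
    intro k
    rw [hUmeas k]
    nth_rewrite 1 [← one_mul (τ (Metric.ball lam r))]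
    refine mul_le_mul_left ?_ _
    rw [← ENNReal.ofReal_one]
    exact ENNReal.ofReal_le_ofReal (Real.one_le_rpow (htk1 k) ha.le)
  -- disjointness
  have hdisjlt : ∀ k j, k < j → j < N → Disjoint (U k) (U j) := by
    intro k j hkj hj
    rw [Set.disjoint_left]
    rintro z ⟨x, hx, hxz⟩ ⟨y, hy, hyz⟩
    have hxy : dil (fun i => tk k ^ (w i)) x = dil (fun i => tk j ^ (w i)) y :=
      hxz.trans hyz.symm
    have hk2 : tk k ≤ 2 := htk2 k (hkj.trans hj)
    have hj2 : tk j ≤ 2 := htk2 j hj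
    have hkj' : tk k ≤ tk j := by
      show 1 + (k:ℝ)*δ ≤ 1 + (j:ℝ)*δ
      have : (k:ℝ) ≤ (j:ℝ) := Nat.cast_le.2 hkj.le
      nlinarith
    have hsep : (tk j - tk k) * ‖lam‖ ≤
        ‖dil (fun i => tk j ^ (w i)) lam - dil (fun i => tk k ^ (w i)) lam‖ := by
      apply dil_sep _ _ _ (by linarith)
      intro i
      have h1 := aux_rpow_sub (hw i) (htk1 k) hkj'
      rw [abs_of_nonneg (by linarith)]
      linarith
    have hup : ‖dil (fun i => tk j ^ (w i)) lam - dil (fun i => tk k ^ (w i)) lam‖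
        < 2 * (M * r) := by
      have heq : dil (fun i => tk j ^ (w i)) lam - dil (fun i => tk k ^ (w i)) lam
          = (dil (fun i => tk j ^ (w i)) lam - dil (fun i => tk j ^ (w i)) y)
            + (dil (fun i => tk k ^ (w i)) x - dil (fun i => tk k ^ (w i)) lam) := by
        rw [hxy]; abel
      rw [heq]
      have h1 : ‖dil (fun i => tk j ^ (w i)) lam - dil (fun i => tk j ^ (w i)) y‖
          ≤ M * ‖lam - y‖ := dil_lip _ M hM0.le (hMt (tk j) (htk1 j) hj2) _ _
      have h2 : ‖dil (fun i => tk k ^ (w i)) x - dil (fun i => tk k ^ (w i)) lam‖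
          ≤ M * ‖x - lam‖ := dil_lip _ M hM0.le (hMt (tk k) (htk1 k) hk2) _ _
      have hdy : ‖lam - y‖ < r := by
        rw [norm_sub_rev, ← dist_eq_norm]; exact Metric.mem_ball.1 hy
      have hdx : ‖x - lam‖ < r := by
        rw [← dist_eq_norm]; exact Metric.mem_ball.1 hx
      have h1' := lt_of_le_of_lt h1 (mul_lt_mul_of_pos_left hdy hM0)
      have h2' := lt_of_le_of_lt h2 (mul_lt_mul_of_pos_left hdx hM0)
      refine lt_of_le_of_lt (norm_add_le _ _) ?_
      linarith
    have hlow : 3*M*r ≤ (tk j - tk k) * ‖lam‖ := by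
      have hjk : δ ≤ tk j - tk k := by
        show δ ≤ (1 + (j:ℝ)*δ) - (1 + (k:ℝ)*δ)
        have : (k:ℝ) + 1 ≤ (j:ℝ) := by exact_mod_cast hkj
        nlinarith
      calc 3*M*r = δ * ρ := hδρ.symm
        _ ≤ (tk j - tk k) * ‖lam‖ := by nlinarith
    nlinarith [hsep, hup, hlow]
  have hdisj : (↑(Finset.range N) : Set ℕ).PairwiseDisjoint U := by
    intro k hk j hj hkj
    rcases hkj.lt_or_gt with h | h
    · exact hdisjlt k j h (Finset.mem_range.1 hj)
    · exact (hdisjlt j k h (Finset.mem_range.1 hk)).symm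
  have hUsub : ∀ k, k < N → U k ⊆ Metric.closedBall 0 (M*(Rb+1)) := by
    intro k hk
    rintro z ⟨x, hx, rfl⟩
    rw [Metric.mem_closedBall, dist_zero_right]
    have h1 : ‖dil (fun i => tk k ^ (w i)) x‖ ≤ M * ‖x‖ :=
      dil_norm_le _ M hM0.le (hMt (tk k) (htk1 k) (htk2 k hk)) _
    have h2 : ‖x‖ - ‖lam‖ ≤ ‖x - lam‖ := norm_sub_norm_le _ _
    have hdx : ‖x - lam‖ < r := by
      rw [← dist_eq_norm]; exact Metric.mem_ball.1 hx
    have h3 : ‖x‖ ≤ Rb + 1 := by linarith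
    calc ‖dil (fun i => tk k ^ (w i)) x‖ ≤ M * ‖x‖ := h1
      _ ≤ M * (Rb + 1) := mul_le_mul_of_nonneg_left h3 hM0.le
  have hunion := measure_biUnion_finset (μ := τ) hdisj (fun k _ => (hUopen k).measurableSet)
  have hle : (N:ℝ≥0∞) * τ (Metric.ball lam r) ≤ T := by
    have hconst : ∑ k ∈ Finset.range N, τ (Metric.ball lam r)
        = (N:ℝ≥0∞) * τ (Metric.ball lam r) := by
      rw [Finset.sum_const, Finset.card_range, nsmul_eq_mul]
    rw [← hconst]
    calc ∑ k ∈ Finset.range N, τ (Metric.ball lam r)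
        ≤ ∑ k ∈ Finset.range N, τ (U k) := Finset.sum_le_sum (fun k _ => hUge k)
      _ = τ (⋃ k ∈ Finset.range N, U k) := hunion.symm
      _ ≤ T := by
          apply measure_mono
          simp only [Set.iUnion_subset_iff]
          intro k hk
          exact hUsub k (Finset.mem_range.1 hk)
  have hN0' : (0:ℝ) < (N:ℝ) := by exact_mod_cast hN0
  have hNinv : ((N:ℝ≥0∞))⁻¹ ≤ ENNReal.ofReal (2*δ) := by
    have h2δ : (N:ℝ)⁻¹ ≤ 2*δ := by
      rw [inv_eq_one_div, div_le_iff₀ hN0']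
      rw [div_lt_iff₀ (by positivity)] at hNge
      nlinarith
    calc ((N:ℝ≥0∞))⁻¹ = ENNReal.ofReal ((N:ℝ)⁻¹) := by
          rw [ENNReal.ofReal_inv_of_pos hN0', ENNReal.ofReal_natCast]
      _ ≤ _ := ENNReal.ofReal_le_ofReal h2δ
  have hfin : τ (Metric.ball lam r) ≤ ENNReal.ofReal (2*δ) * T := by
    have h1 : τ (Metric.ball lam r)
        = (N:ℝ≥0∞)⁻¹ * ((N:ℝ≥0∞) * τ (Metric.ball lam r)) := by
      rw [← mul_assoc, ENNReal.inv_mul_cancel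
        (by exact_mod_cast hN0.ne' : (N:ℝ≥0∞) ≠ 0) (ENNReal.natCast_ne_top N), one_mul]
    rw [h1]
    exact mul_le_mul' hNinv hle
  calc τ (Metric.ball lam r) ≤ ENNReal.ofReal (2*δ) * T := hfin
    _ = ENNReal.ofReal (2*δ * T.toReal) := by
        nth_rewrite 1 [← ENNReal.ofReal_toReal hTtop]
        rw [← ENNReal.ofReal_mul (by positivity)]
    _ ≤ ENNReal.ofReal (6*M*(T.toReal+1)/ρ * r ^ γ) := by
        apply ENNReal.ofReal_le_ofReal
        have hrγ : r ≤ r ^ γ := by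
          nth_rewrite 1 [← Real.rpow_one r]
          exact Real.rpow_le_rpow_of_exponent_ge hr hr1 (le_of_lt hγ1)
        have hrγ0 : (0:ℝ) ≤ r ^ γ := Real.rpow_nonneg hr.le γ
        have key : 6*M*T.toReal*r ≤ 6*M*(T.toReal+1)*(r^γ) := by
          calc 6*M*T.toReal*r ≤ 6*M*T.toReal*(r^γ) :=
                mul_le_mul_of_nonneg_left hrγ (by positivity)
            _ ≤ 6*M*(T.toReal+1)*(r^γ) :=
                mul_le_mul_of_nonneg_right (by nlinarith) hrγ0
        have e1 : 2*δ*T.toReal = 6*M*T.toReal*r/ρ := by rw [hδdef]; ring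
        have e2 : 6*M*(T.toReal+1)/ρ * r ^ γ = 6*M*(T.toReal+1)*(r^γ)/ρ := by ring
        rw [e1, e2]
        gcongr
end

section
/- Let 𝔤 be a nilpotent Lie algebra whose capacity map J satisfies the Métivier condition |J(x̄,τ)| ≥ |x̄||τ| for all x̄ ∈ 𝔤/𝔷 and τ ∈ 𝔷* (with respect to some norms). Then 𝔤 is 2-step with 𝔷 = [𝔤,𝔤], and dim(𝔤/𝔷) ≥ dim 𝔷. -/
lemma sep_aux {V : Type*} [AddCommGroup V] [Module ℝ V] (S : Submodule ℝ V) (z : V)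
    (hz : z ∉ S) : ∃ τ : V →ₗ[ℝ] ℝ, (∀ s ∈ S, τ s = 0) ∧ τ z ≠ 0 := by
  have h0 : S.mkQ z ≠ 0 := by
    simpa [Submodule.Quotient.mk_eq_zero] using hz
  have := (Module.forall_dual_apply_eq_zero_iff ℝ (S.mkQ z)).not.mpr h0
  push_neg at this
  obtain ⟨g, hg⟩ := this
  refine ⟨g.comp S.mkQ, fun s hs => ?_, hg⟩
  have : S.mkQ s = 0 := by simpa [Submodule.Quotient.mk_eq_zero] using hs
  simp [this]

/-- If the capacity map `J` of a (nonabelian, finite-dimensional) nilpotent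
Lie algebra `𝔤` satisfies the Métivier condition — i.e. `J(·,τ)` is injective for every
`τ ≠ 0` in `𝔷*` and `J(x̄,·)` is injective for every `x̄ ≠ 0` in `𝔤/𝔷` — then `𝔤` is
2-step with `𝔷 = [𝔤,𝔤]`, and `dim(𝔤/𝔷) ≥ dim 𝔷`.  Here `J(P(x),τ)(y) = τ([x,y])`
for `y ∈ 𝔶 = {v : [v,𝔤] ⊆ 𝔷}`, and functionals on `𝔷` are represented by their
extensions to `𝔤`. -/
theorem stmt6 (L : Type*) [LieRing L] [LieAlgebra ℝ L] [Module.Finite ℝ L]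
    [LieRing.IsNilpotent L]
    (hnab : LieAlgebra.center ℝ L ≠ ⊤)
    (H1 : ∀ τ : L →ₗ[ℝ] ℝ, (∃ z ∈ LieAlgebra.center ℝ L, τ z ≠ 0) →
      ∀ x : L, (∀ y : L, (∀ g : L, ⁅y, g⁆ ∈ LieAlgebra.center ℝ L) → τ ⁅x, y⁆ = 0) →
        x ∈ LieAlgebra.center ℝ L)
    (H2 : ∀ x : L, x ∉ LieAlgebra.center ℝ L →
      ∀ τ : L →ₗ[ℝ] ℝ, (∀ y : L, (∀ g : L, ⁅y, g⁆ ∈ LieAlgebra.center ℝ L) → τ ⁅x, y⁆ = 0) →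
        ∀ z ∈ LieAlgebra.center ℝ L, τ z = 0) :
    ⁅(⊤ : LieIdeal ℝ L), (⊤ : LieIdeal ℝ L)⁆ = LieAlgebra.center ℝ L ∧
    LieModule.lowerCentralSeries ℝ L L 2 = ⊥ ∧
    Module.finrank ℝ ↥(LieAlgebra.center ℝ L)
      ≤ Module.finrank ℝ (L ⧸ (LieAlgebra.center ℝ L).toSubmodule) := by
  have hmem : ∀ x : L, x ∈ LieAlgebra.center ℝ L ↔ ∀ g : L, ⁅g, x⁆ = 0 := fun x =>
    LieModule.mem_maxTrivSubmodule ℝ L L x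
  -- L is nontrivial
  have hLnt : Nontrivial L := by
    by_contra h
    rw [not_nontrivial_iff_subsingleton] at h
    exact hnab (by ext x; simp [Subsingleton.elim x 0])
  -- a functional nonzero somewhere on the center
  have : Nontrivial (LieAlgebra.center ℝ L) := LieAlgebra.non_trivial_center_of_isNilpotent (R := ℝ) (L := L)
  obtain ⟨z0, hz0⟩ := exists_ne (0 : LieAlgebra.center ℝ L)
  have hz0' : (z0 : L) ≠ 0 := fun h => hz0 (Subtype.ext h)
  obtain ⟨τ0, -, hτ0z⟩ := sep_aux (⊥ : Submodule ℝ L) (z0 : L) (by simpa using hz0')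
  have hτ0 : ∃ z ∈ LieAlgebra.center ℝ L, τ0 z ≠ 0 := ⟨z0, z0.2, hτ0z⟩
  -- Key step 1: all brackets are central
  have K1 : ∀ g c : L, ⁅g, c⁆ ∈ LieAlgebra.center ℝ L := by
    intro g c
    refine H1 τ0 hτ0 _ (fun y hy => ?_)
    have h1 : ⁅c, y⁆ ∈ LieAlgebra.center ℝ L := by
      rw [← lie_skew]; exact neg_mem (hy c)
    have h2 : ⁅g, y⁆ ∈ LieAlgebra.center ℝ L := by
      rw [← lie_skew]; exact neg_mem (hy g)
    have hz : ⁅⁅g, c⁆, y⁆ = 0 := by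
      rw [lie_lie, (hmem _).mp h1 g, (hmem _).mp h2 c]
      simp
    rw [hz, map_zero]
  -- an element outside the center
  have hx0 : ∃ x : L, x ∉ LieAlgebra.center ℝ L := by
    by_contra h
    push_neg at h
    exact hnab (by ext x; simpa using h x)
  obtain ⟨x0, hx0⟩ := hx0
  -- Key step 2: for x not central, ad x is onto the center
  have K2 : ∀ x : L, x ∉ LieAlgebra.center ℝ L → ∀ z ∈ LieAlgebra.center ℝ L,
      ∃ g : L, ⁅x, g⁆ = z := by
    intro x hx z hz
    by_contra h
    push_neg at h
    have hzS : z ∉ LinearMap.range (LieAlgebra.ad ℝ L x) := by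
      rintro ⟨g, hg⟩
      exact h g (by simpa [LieAlgebra.ad_apply] using hg)
    obtain ⟨τ, hτS, hτz⟩ := sep_aux _ z hzS
    exact hτz (H2 x hx τ (fun y _ => hτS _ ⟨y, by simp [LieAlgebra.ad_apply]⟩) z hz)
  -- first conjunct
  have conj1 : ⁅(⊤ : LieIdeal ℝ L), (⊤ : LieIdeal ℝ L)⁆ = LieAlgebra.center ℝ L := by
    refine le_antisymm ((LieSubmodule.lie_le_iff _ _ _).mpr fun x _ m _ => K1 x m) ?_
    intro z hz
    obtain ⟨g, hg⟩ := K2 x0 hx0 z hz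
    exact hg ▸ LieSubmodule.lie_mem_lie trivial trivial
  -- second conjunct
  have hl1 : LieModule.lowerCentralSeries ℝ L L 1 ≤ LieAlgebra.center ℝ L := by
    rw [LieModule.lowerCentralSeries_succ]
    exact (LieSubmodule.lie_le_iff _ _ _).mpr fun x _ m _ => K1 x m
  have conj2 : LieModule.lowerCentralSeries ℝ L L 2 = ⊥ := by
    rw [LieModule.lowerCentralSeries_succ, eq_bot_iff]
    refine (LieSubmodule.lie_le_iff _ _ _).mpr fun x _ m hm => ?_
    have : ⁅x, m⁆ = 0 := (hmem m).mp (hl1 hm) x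
    simp [this]
  refine ⟨conj1, conj2, ?_⟩
  -- dimension count
  set Zs := (LieAlgebra.center ℝ L).toSubmodule with hZs
  have hK1' : ∀ g : L, LieAlgebra.ad ℝ L x0 g ∈ Zs := fun g => K1 x0 g
  let f : L →ₗ[ℝ] Zs := (LieAlgebra.ad ℝ L x0).codRestrict Zs hK1'
  have hker : Zs ≤ LinearMap.ker f := by
    intro z hz
    have : ⁅x0, z⁆ = 0 := (hmem z).mp hz x0
    simp only [LinearMap.mem_ker]
    exact Subtype.ext (by simpa [LieAlgebra.ad_apply, f])
  let q := Zs.liftQ f hker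
  have hq : Function.Surjective q := by
    rintro ⟨z, hz⟩
    obtain ⟨g, hg⟩ := K2 x0 hx0 z hz
    exact ⟨Submodule.Quotient.mk g, Subtype.ext (by simpa [q, f, LieAlgebra.ad_apply] using hg)⟩
  have : Module.finrank ℝ Zs ≤ Module.finrank ℝ (L ⧸ Zs) := by
    have h1 := LinearMap.finrank_range_le q
    rwa [LinearMap.range_eq_top.mpr hq, finrank_top] at h1
  exact this
end

section
/- If G is h-capacious, with ω₁,...,ω_h ∈ (𝔤/𝔷)* and z₁,...,z_h ∈ 𝔷 as in the definition, then the functionals ω_j ∘ P vanish on [𝔤,𝔤]; consequently h ≤ min{dim 𝔷, dim 𝔤 − dim(𝔷 + [𝔤,𝔤])}. -/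
/-- If `G` is `h`-capacious — i.e. there are linearly independent
homogeneous `ω₁,…,ω_h ∈ (𝔤/𝔷)*` (encoded as functionals on `𝔤` vanishing on the
center) and linearly independent homogeneous `z₁,…,z_h ∈ 𝔷` such that
`|J(x̄,τ)| ≥ |ω_j(x̄)||τ(z_j)|` for all `x̄,τ` (the dual norm `|J(x̄,τ)|` being
witnessed by some `y ∈ 𝔶` with `N y ≤ 1`) — then each `ω_j ∘ P` vanishes on
`[𝔤,𝔤]`, and consequently `h ≤ min{dim 𝔷, dim 𝔤 − dim(𝔷 + [𝔤,𝔤])}`. -/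
theorem stmt9 (L : Type*) [LieRing L] [LieAlgebra ℝ L] [Module.Finite ℝ L]
    (δ : ℝ → (L ≃ₗ⁅ℝ⁆ L)) (h : ℕ) (N : L → ℝ) (hN : ∀ v, 0 ≤ N v)
    (ω : Fin h → (L →ₗ[ℝ] ℝ)) (z : Fin h → L)
    (hω_indep : LinearIndependent ℝ ω) (hz_indep : LinearIndependent ℝ z)
    (hω_cent : ∀ j, ∀ c ∈ LieAlgebra.center ℝ L, ω j c = 0)
    (hz_cent : ∀ j, z j ∈ LieAlgebra.center ℝ L)
    (hω_hom : ∀ j, ∃ d : ℝ, ∀ t : ℝ, 0 < t → ∀ v : L, ω j (δ t v) = t ^ d * ω j v)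
    (hz_hom : ∀ j, ∃ d : ℝ, ∀ t : ℝ, 0 < t → δ t (z j) = t ^ d • z j)
    (hJ : ∀ j, ∀ x : L, ∀ τ : L →ₗ[ℝ] ℝ,
      ∃ y : L, (∀ g : L, ⁅y, g⁆ ∈ LieAlgebra.center ℝ L) ∧ N y ≤ 1 ∧
        |ω j x| * |τ (z j)| ≤ |τ ⁅x, y⁆|) :
    (∀ j, ∀ x ∈ ⁅(⊤ : LieIdeal ℝ L), (⊤ : LieIdeal ℝ L)⁆, ω j x = 0) ∧
    h ≤ Module.finrank ℝ ↥(LieAlgebra.center ℝ L) ∧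
    h + Module.finrank ℝ
        ↥((LieAlgebra.center ℝ L).toSubmodule
            ⊔ (⁅(⊤ : LieIdeal ℝ L), (⊤ : LieIdeal ℝ L)⁆ : LieIdeal ℝ L).toSubmodule)
      ≤ Module.finrank ℝ L := by
  -- Key fact: if every bracket of `y` is central, then `⁅x, y⁆ = 0` for all
  -- `x` in the commutator ideal.
  have key : ∀ y : L, (∀ g : L, ⁅y, g⁆ ∈ LieAlgebra.center ℝ L) →
      ∀ x ∈ (⁅(⊤ : LieIdeal ℝ L), (⊤ : LieIdeal ℝ L)⁆ : LieIdeal ℝ L), ⁅x, y⁆ = 0 := by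
    intro y hy x hx
    have hx' : x ∈ Submodule.span ℝ
        { m : L | ∃ a ∈ (⊤ : LieIdeal ℝ L), ∃ b ∈ (⊤ : LieIdeal ℝ L), ⁅a, b⁆ = m } := by
      rw [← LieSubmodule.lieIdeal_oper_eq_linear_span']
      exact hx
    have hyx : ⁅y, x⁆ = 0 := by
      refine Submodule.span_induction ?_ ?_ ?_ ?_ hx'
      · rintro m ⟨a, -, b, -, rfl⟩
        have h1 : ⁅(⁅y, a⁆ : L), b⁆ = 0 := by
          rw [← lie_skew, hy a b, neg_zero]
        have h2 : ⁅a, (⁅y, b⁆ : L)⁆ = 0 := hy b a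
        rw [leibniz_lie, h1, h2, add_zero]
      · simp
      · intro a b _ _ ha hb; rw [lie_add, ha, hb, add_zero]
      · intro t a _ ha; rw [lie_smul, ha, smul_zero]
    rw [← lie_skew, hyx, neg_zero]
  -- Part 1: the `ω j` vanish on the commutator ideal.
  have part1 : ∀ j, ∀ x ∈ ⁅(⊤ : LieIdeal ℝ L), (⊤ : LieIdeal ℝ L)⁆, ω j x = 0 := by
    intro j x hx
    have hzj : z j ≠ 0 := hz_indep.ne_zero j
    obtain ⟨τ, hτ⟩ : ∃ τ : L →ₗ[ℝ] ℝ, τ (z j) ≠ 0 := by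
      by_contra hc
      push_neg at hc
      exact hzj ((Module.forall_dual_apply_eq_zero_iff ℝ (z j)).1 hc)
    obtain ⟨y, hy, -, hle⟩ := hJ j x τ
    rw [key y hy x hx] at hle
    simp only [map_zero, abs_zero] at hle
    have hb := abs_pos.2 hτ
    have h0 : |(ω j) x| = 0 := by nlinarith [abs_nonneg ((ω j) x)]
    exact abs_eq_zero.1 h0
  refine ⟨part1, ?_, ?_⟩
  -- Part 2: h ≤ dim center.
  · have : LinearIndependent ℝ (fun j => (⟨z j, hz_cent j⟩ :
        (LieAlgebra.center ℝ L).toSubmodule)) := by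
      apply LinearIndependent.of_comp ((LieAlgebra.center ℝ L).toSubmodule.subtype)
      exact hz_indep
    have h3 := this.fintype_card_le_finrank
    simp at h3
    exact h3
  -- Part 3.
  · set W : Submodule ℝ L := (LieAlgebra.center ℝ L).toSubmodule
        ⊔ (⁅(⊤ : LieIdeal ℝ L), (⊤ : LieIdeal ℝ L)⁆ : LieIdeal ℝ L).toSubmodule with hW
    have hWker : ∀ j, W ≤ LinearMap.ker (ω j) := by
      intro j
      apply sup_le
      · intro c hc; exact hω_cent j c hc
      · intro c hc; exact part1 j c hc
    let ω' : Fin h → (L ⧸ W →ₗ[ℝ] ℝ) := fun j => W.liftQ (ω j) (hWker j)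
    have hcomp : ⇑(LinearMap.lcomp ℝ ℝ W.mkQ) ∘ ω' = ω := by
      funext j; ext v; simp [ω']
    have hω'_indep : LinearIndependent ℝ ω' := by
      apply LinearIndependent.of_comp (LinearMap.lcomp ℝ ℝ W.mkQ)
      rw [hcomp]
      exact hω_indep
    have h2 : h ≤ Module.finrank ℝ (L ⧸ W) := by
      have := hω'_indep.fintype_card_le_finrank
      rw [Fintype.card_fin] at this
      calc h ≤ Module.finrank ℝ (L ⧸ W →ₗ[ℝ] ℝ) := this
        _ = Module.finrank ℝ (L ⧸ W) := Subspace.dual_finrank_eq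
    have := W.finrank_quotient_add_finrank
    omega
end
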